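/- Every single-coalition-first neighborhood model z-represents a single-coalition-first action model: given a single-coalition-first neighborhood model (suc, {nei_a : a ∈ AG}) with derived neighborhood functions nei_C, there exist a nonempty type Ac of actions and outcome functions out_a : S × JA_a → P(S) for each agent a such that (suc, {out_a : a ∈ AG}) is a single-coalition-first action model whose actual effectivity functions satisfy AE_C(s) = nei_C(s) for every coalition C and every state s. -/

import Mathlib

/-- `Δ` is a cover of `X` if `⋃ Δ = X` and `∅ ∉ Δ`. -/
def IsCover {S : Type} (Δ : Set (Set S)) (X : Set S) : Prop :=
  ⋃₀ Δ = X ∧ ∅ ∉ Δ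

/-- Restriction of a joint action of `C` to a subcoalition `D ⊆ C`. -/
def restr {AG Ac : Type} {C D : Set AG} (h : D ⊆ C) (σ : ↥C → Ac) : ↥D → Ac :=
  fun a => σ ⟨a.1, h a.2⟩

open Classical in
/-- The derived outcome function of a single-coalition-first action model. -/
noncomputable def sOut {AG S Ac : Type} (suc : S → Set S)
    (outa : (a : AG) → S → (↥({a} : Set AG) → Ac) → Set S)
    (C : Set AG) (s : S) (σ : ↥C → Ac) : Set S :=
  if C.Nonempty then
    ⋂ a : ↥C, outa a.1 s (restr (Set.singleton_subset_iff.mpr a.2) σ)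
  else suc s

open Classical in
/-- The derived neighborhood functions of a single-coalition-first
neighborhood model. -/
noncomputable def dNei {AG S : Type} (suc : S → Set S)
    (nei : AG → S → Set (Set S)) (C : Set AG) (s : S) : Set (Set S) :=
  if suc s = ∅ then ∅
  else if C = ∅ then {suc s}
  else {Y : Set S | Y.Nonempty ∧
    ∃ X : ↥C → Set S, (∀ a : ↥C, X a ∈ nei a.1 s) ∧ Y = ⋂ a : ↥C, X a}

/-- Every single-coalition-first neighborhood model z-represents a
single-coalition-first action model: there are a nonempty type of actions and
individual outcome functions forming a single-coalition-first action model
(with the same successor function) whose actual effectivity functions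
`AE_C(s) = { out_C(s,σ) : σ ∈ av_C(s) }` coincide with the derived
neighborhood functions. -/
theorem scf_nbhd_represents_scf_action
    {AG S : Type} [Fintype AG] [Nonempty AG] [Nonempty S]
    (suc : S → Set S) (nei : AG → S → Set (Set S))
    (hnei : ∀ (a : AG) (s : S), IsCover (nei a s) (suc s)) :
    ∃ (Ac : Type) (_ : Nonempty Ac)
      (outa : (a : AG) → S → (↥({a} : Set AG) → Ac) → Set S),
      (∀ (a : AG) (s : S),
        ⋃₀ {Y : Set S | ∃ σ : ↥({a} : Set AG) → Ac, Y = outa a s σ} = suc s) ∧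
      (∀ (C : Set AG) (s : S),
        {Y : Set S | ∃ σ : ↥C → Ac, Y = sOut suc outa C s σ ∧ Y ≠ ∅} =
          dNei suc nei C s) := by
  classical
  refine ⟨Set S, ⟨∅⟩,
    fun a s σ => if σ ⟨a, rfl⟩ ∈ nei a s then σ ⟨a, rfl⟩ else ∅, ?_, ?_⟩
  · intro a s
    ext x
    simp only [Set.mem_sUnion, Set.mem_setOf_eq]
    constructor
    · rintro ⟨Y, ⟨σ, rfl⟩, hx⟩
      by_cases h : σ ⟨a, rfl⟩ ∈ nei a s
      · rw [if_pos h] at hx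
        rw [← (hnei a s).1]
        exact ⟨_, h, hx⟩
      · rw [if_neg h] at hx
        exact absurd hx (Set.notMem_empty x)
    · intro hx
      rw [← (hnei a s).1] at hx
      obtain ⟨Y, hY, hx⟩ := hx
      exact ⟨Y, ⟨fun _ => Y, by simp [hY]⟩, hx⟩
  · intro C s
    by_cases hs : suc s = ∅
    · have hne : ∀ a, nei a s = ∅ := by
        intro a
        by_contra h
        obtain ⟨Y, hY⟩ := Set.nonempty_iff_ne_empty.mpr h
        have hsub : Y ⊆ suc s := (hnei a s).1 ▸ Set.subset_sUnion_of_mem hY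
        rw [hs, Set.subset_empty_iff] at hsub
        exact (hnei a s).2 (hsub ▸ hY)
      ext Y
      simp only [dNei, if_pos hs, Set.mem_setOf_eq, Set.mem_empty_iff_false,
        iff_false, not_exists]
      rintro σ ⟨rfl, hne'⟩
      apply hne'
      unfold sOut
      by_cases hC : C.Nonempty
      · rw [if_pos hC]
        obtain ⟨a, ha⟩ := hC
        apply Set.eq_empty_iff_forall_notMem.mpr
        intro x hx
        have h := Set.mem_iInter.mp hx ⟨a, ha⟩
        simp only [restr, hne a, Set.mem_empty_iff_false, if_false] at h
      · rw [if_neg hC]; exact hs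
    · by_cases hC : C = ∅
      · subst hC
        have hCne : ¬ (∅ : Set AG).Nonempty := Set.not_nonempty_empty
        ext Y
        simp only [dNei, if_neg hs, if_pos rfl, if_true, Set.mem_singleton_iff,
          Set.mem_setOf_eq]
        constructor
        · rintro ⟨σ, rfl, h⟩
          rw [sOut, if_neg hCne]
        · rintro rfl
          refine ⟨fun a => (a.2 : a.1 ∈ (∅ : Set AG)).elim, ?_, ?_⟩
          · rw [sOut, if_neg hCne]
          · exact hs
      · have hCne : C.Nonempty := Set.nonempty_iff_ne_empty.mpr hC
        ext Y
        simp only [dNei, if_neg hs, if_neg hC, Set.mem_setOf_eq]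
        constructor
        · rintro ⟨σ, rfl, hY⟩
          rw [sOut, if_pos hCne] at hY ⊢
          have hmem : ∀ a : ↥C, σ a ∈ nei a.1 s := by
            intro a
            by_contra h
            apply hY
            apply Set.eq_empty_iff_forall_notMem.mpr
            intro x hx
            have hmm := Set.mem_iInter.mp hx a
            simp only [restr] at hmm
            have hmm : x ∈ (∅ : Set S) := (if_neg h : (if σ a ∈ nei a.1 s then σ a else ∅) = ∅) ▸ hmm
            exact hmm
          refine ⟨Set.nonempty_iff_ne_empty.mpr hY, σ, hmem, ?_⟩
          apply Set.iInter_congr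
          intro a
          simp only [restr]
          exact if_pos (hmem a)
        · rintro ⟨hYne, X, hX, rfl⟩
          refine ⟨X, ?_, Set.nonempty_iff_ne_empty.mp hYne⟩
          rw [sOut, if_pos hCne]
          apply Set.iInter_congr
          intro a
          simp only [restr]
          exact (if_pos (hX a)).symm
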